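/- Let r ≥ 1 be a natural number, q ∈ [0,1], and β ∈ (0,1). Let V be an ℕ-valued random variable on a probability space with V ≤ r almost surely, and suppose V is stochastically dominated by Binomial(r, q), i.e., for every t ∈ ℝ, Pr[V > t] ≤ Pr_{X ~ Binomial(r,q)}[X > t]. Then Pr[CPL(r, V, β) ≤ q] ≥ 1 − β. -/

import Mathlib

open MeasureTheory

/-- Upper tail probability `Pr[X ≥ v]` for `X ~ Binomial(r, p)`. -/
noncomputable def binomTail (r v : ℕ) (p : ℝ) : ℝ :=
  ∑ k ∈ Finset.Icc v r, (r.choose k : ℝ) * p ^ k * (1 - p) ^ (r - k)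

lemma telescope (g : ℕ → ℝ) : ∀ v n : ℕ, v ≤ n + 1 →
    ∑ k ∈ Finset.Icc v n, (g k - g (k+1)) = g v - g (n+1) := by
  intro v n
  induction n with
  | zero => intro h; interval_cases v <;> simp
  | succ n ih =>
    intro h
    rcases Nat.lt_or_ge (n+1) v with h' | h'
    · have : v = n + 2 := by omega
      subst this
      rw [Finset.Icc_eq_empty (by omega), Finset.sum_empty, sub_self]
    · rw [Finset.sum_Icc_succ_top h', ih h']
      ring

lemma cast_id1 (r k : ℕ) (hk : 1 ≤ k) (hkr : k ≤ r) :
    (r.choose k : ℝ) * (k : ℝ) = (r : ℝ) * ((r-1).choose (k-1) : ℝ) := by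
  obtain ⟨j, rfl⟩ : ∃ j, k = j + 1 := ⟨k - 1, by omega⟩
  have hr : 1 ≤ r := le_trans hk hkr
  have := Nat.add_one_mul_choose_eq (r-1) j
  rw [Nat.sub_add_cancel hr] at this
  have : r * (r-1).choose j = r.choose (j+1) * (j+1) := this
  have := congrArg (Nat.cast : ℕ → ℝ) this
  push_cast at this
  push_cast
  linarith [this]

lemma cast_id2 (r k : ℕ) (hr : 1 ≤ r) (hkr : k ≤ r) :
    (r.choose k : ℝ) * ((r - k : ℕ) : ℝ) = (r : ℝ) * ((r-1).choose k : ℝ) := by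
  have h1 := Nat.choose_succ_right_eq r k
  have h2 := Nat.add_one_mul_choose_eq (r-1) k
  rw [Nat.sub_add_cancel hr] at h2
  have h3 : r.choose k * (r - k) = r * (r-1).choose k := by
    rw [← h1, h2]
  have := congrArg (Nat.cast : ℕ → ℝ) h3
  push_cast at this
  linarith [this]

lemma hasDerivAt_binomTail (r v : ℕ) (hv : 1 ≤ v) (hvr : v ≤ r) (p : ℝ) :
    HasDerivAt (fun x => binomTail r v x)
      ((r : ℝ) * ((r-1).choose (v-1) : ℝ) * p ^ (v-1) * (1-p) ^ (r-v)) p := by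
  set g : ℕ → ℝ := fun k => (r : ℝ) * ((r-1).choose (k-1) : ℝ) * p ^ (k-1) * (1-p) ^ (r-k)
    with hg
  have key : ∀ k ∈ Finset.Icc v r,
      HasDerivAt (fun x : ℝ => (r.choose k : ℝ) * x ^ k * (1 - x) ^ (r - k))
        (g k - g (k+1)) p := by
    intro k hk
    simp only [Finset.mem_Icc] at hk
    have hk1 : 1 ≤ k := le_trans hv hk.1
    have hkr : k ≤ r := hk.2
    have h1 : HasDerivAt (fun x : ℝ => (r.choose k : ℝ) * x ^ k)
        ((r.choose k : ℝ) * ((k : ℝ) * p ^ (k-1))) p := (hasDerivAt_pow k p).const_mul _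
    have h2 : HasDerivAt (fun x : ℝ => (1 - x) ^ (r - k))
        (((r - k : ℕ) : ℝ) * (1-p) ^ (r - k - 1) * (-1)) p := by
      have hinner : HasDerivAt (fun x : ℝ => 1 - x) (-1) p := by
        simpa using (hasDerivAt_id p).const_sub 1
      exact (hasDerivAt_pow (r - k) (1 - p)).comp p hinner
    have h := h1.fun_mul h2
    refine h.congr_deriv ?_
    symm
    have e1 := cast_id1 r k hk1 hkr
    have e2 := cast_id2 r k (le_trans hv hvr) hkr
    have e3 : r - k - 1 = r - (k + 1) := by omega
    have e4 : (k + 1) - 1 = k := by omega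
    rw [hg]
    simp only [e3, e4]
    rw [← e3]
    have hsplit : (1 - p) ^ (r - k) = (1-p) ^ (r - k - 1 + 1) ∨ k = r := by
      rcases Nat.lt_or_ge k r with h' | h'
      · left; congr 1; omega
      · right; omega
    rcases hsplit with hs | hs
    · rw [hs]
      linear_combination (-(p^(k-1)*(1-p)^(r-k-1+1))) * e1 + (p^k*(1-p)^(r-k-1)) * e2
    · subst hs
      have hz : (((k-1).choose k : ℕ) : ℝ) = 0 := by
        simp [Nat.choose_eq_zero_of_lt (show k - 1 < k by omega)]
      simp only [Nat.sub_self, pow_zero, Nat.cast_zero, hz]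
      linear_combination (-(p^(k-1))) * e1
  have hsum := HasDerivAt.fun_sum key
  have : ∑ k ∈ Finset.Icc v r, (g k - g (k+1)) = g v - g (r+1) :=
    telescope g v r (by omega)
  rw [this] at hsum
  have hgr : g (r+1) = 0 := by
    simp only [hg, Nat.add_sub_cancel, Nat.choose_eq_zero_of_lt (by omega : r - 1 < r)]
    ring
  rw [hgr, sub_zero] at hsum
  exact hsum

lemma binomTail_continuous (r v : ℕ) : Continuous (binomTail r v) := by
  unfold binomTail
  exact continuous_finset_sum _ fun k _ =>
    (continuous_const.mul (continuous_pow k)).mul ((continuous_const.sub continuous_id).pow _)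

lemma binomTail_monoOn (r v : ℕ) (hv : 1 ≤ v) :
    MonotoneOn (binomTail r v) (Set.Icc (0:ℝ) 1) := by
  rcases Nat.lt_or_ge r v with h | h
  · have : ∀ p : ℝ, binomTail r v p = 0 := by
      intro p
      unfold binomTail
      rw [Finset.Icc_eq_empty (by omega), Finset.sum_empty]
    intro x _ y _ _
    simp [this]
  · apply monotoneOn_of_deriv_nonneg (convex_Icc 0 1) (binomTail_continuous r v).continuousOn
    · intro x _
      exact (hasDerivAt_binomTail r v hv h x).differentiableAt.differentiableWithinAt
    · intro x hx
      rw [interior_Icc, Set.mem_Ioo] at hx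
      rw [(hasDerivAt_binomTail r v hv h x).deriv]
      have h1 : (0:ℝ) ≤ x := le_of_lt hx.1
      have h2 : (0:ℝ) ≤ 1 - x := by linarith [hx.2]
      positivity

lemma binomTail_zero_eq_one (r : ℕ) (p : ℝ) : binomTail r 0 p = 1 := by
  unfold binomTail
  have h : Finset.Icc 0 r = Finset.range (r+1) := by
    rw [Finset.range_eq_Ico, Finset.Ico_add_one_right_eq_Icc]
  rw [h]
  calc ∑ k ∈ Finset.range (r+1), (r.choose k : ℝ) * p ^ k * (1 - p) ^ (r - k)
      = (p + (1-p)) ^ r := by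
        rw [add_pow]
        exact Finset.sum_congr rfl fun k _ => by ring
    _ = 1 := by norm_num

lemma binomTail_anti (r : ℕ) {q : ℝ} (hq0 : 0 ≤ q) (hq1 : q ≤ 1) {v v' : ℕ} (h : v ≤ v') :
    binomTail r v' q ≤ binomTail r v q := by
  unfold binomTail
  apply Finset.sum_le_sum_of_subset_of_nonneg (Finset.Icc_subset_Icc_left h)
  intro k _ _
  have h2 : (0:ℝ) ≤ 1 - q := by linarith
  positivity

/-- The Clopper–Pearson lower bound
`CPL(r, v, β) := sSup { p ∈ [0,1] : Pr_{X ~ Binomial(r,p)}[X ≥ v] ≤ β }`. -/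
noncomputable def CPL (r v : ℕ) (β : ℝ) : ℝ :=
  sSup {p : ℝ | p ∈ Set.Icc (0 : ℝ) 1 ∧ binomTail r v p ≤ β}

/-- Strict upper tail probability `Pr[X > t]` for `X ~ Binomial(r, q)`, `t : ℝ`. -/
noncomputable def binomGt (r : ℕ) (q t : ℝ) : ℝ :=
  ∑ k ∈ Finset.range (r + 1),
    if t < (k : ℝ) then (r.choose k : ℝ) * q ^ k * (1 - q) ^ (r - k) else 0

theorem stmt2 {Ω : Type*} [MeasurableSpace Ω] (P : Measure Ω) [IsProbabilityMeasure P]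
    (r : ℕ) (hr : 1 ≤ r) (q : ℝ) (hq : q ∈ Set.Icc (0 : ℝ) 1)
    (β : ℝ) (hβ : β ∈ Set.Ioo (0 : ℝ) 1)
    (V : Ω → ℕ) (hV : Measurable V) (hVr : ∀ᵐ ω ∂P, V ω ≤ r)
    (hdom : ∀ t : ℝ, (P {ω | t < (V ω : ℝ)}).toReal ≤ binomGt r q t) :
    1 - β ≤ (P {ω | CPL r (V ω) β ≤ q}).toReal := by
  classical
  obtain ⟨hq0, hq1⟩ := hq
  obtain ⟨hβ0, hβ1⟩ := hβ
  have hex : ∃ v, binomTail r v q ≤ β := by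
    refine ⟨r+1, ?_⟩
    unfold binomTail
    rw [Finset.Icc_eq_empty (by omega), Finset.sum_empty]
    linarith
  set v0 := Nat.find hex with hv0def
  have hv0le : binomTail r v0 q ≤ β := Nat.find_spec hex
  have hv0min : ∀ v < v0, β < binomTail r v q := fun v h =>
    lt_of_not_ge (Nat.find_min hex h)
  have hv0pos : 1 ≤ v0 := by
    by_contra h
    have h0 : v0 = 0 := by omega
    have := hv0le
    rw [h0, binomTail_zero_eq_one] at this
    linarith
  -- Claim: V ω < v0 → CPL r (V ω) β ≤ q
  have claim : ∀ v : ℕ, v < v0 → CPL r v β ≤ q := by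
    intro v hv
    apply Real.sSup_le _ hq0
    rintro p ⟨⟨hp0, hp1⟩, hpβ⟩
    by_contra hpq
    push_neg at hpq
    rcases Nat.eq_zero_or_pos v with h0 | h1
    · rw [h0, binomTail_zero_eq_one] at hpβ
      linarith
    · have hmono := binomTail_monoOn r v h1 (Set.mem_Icc.mpr ⟨hq0, hq1⟩)
        (Set.mem_Icc.mpr ⟨hp0, hp1⟩) (le_of_lt hpq)
      have := hv0min v hv
      linarith
  set A := {ω | CPL r (V ω) β ≤ q} with hA
  set B := {ω | v0 ≤ V ω} with hB
  have hmB : MeasurableSet B := hV measurableSet_Ici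
  have hsub : Bᶜ ⊆ A := by
    intro ω hω
    simp only [hB, Set.mem_compl_iff, Set.mem_setOf_eq, not_le] at hω
    exact claim (V ω) hω
  have hcast : ∀ n : ℕ, ((v0:ℝ) - 1 < (n:ℝ)) ↔ v0 ≤ n := by
    intro n
    rw [sub_lt_iff_lt_add]
    have h' : ((v0:ℝ) < (n:ℝ) + 1) ↔ (v0 < n + 1) := by exact_mod_cast Iff.rfl
    rw [h']
    omega
  have hBle : (P B).toReal ≤ β := by
    have hd := hdom ((v0:ℝ) - 1)
    have hset : {ω | (v0:ℝ) - 1 < (V ω : ℝ)} = B := by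
      ext ω
      simp only [hB, Set.mem_setOf_eq, hcast]
    have hGt : binomGt r q ((v0:ℝ) - 1) = binomTail r v0 q := by
      unfold binomGt binomTail
      rw [← Finset.sum_filter]
      apply Finset.sum_congr _ fun _ _ => rfl
      ext k
      simp only [Finset.mem_filter, Finset.mem_range, Finset.mem_Icc, hcast]
      omega
    rw [hset, hGt] at hd
    linarith
  have h1 : P Bᶜ ≤ P A := measure_mono hsub
  have h2 : (P Bᶜ).toReal = 1 - (P B).toReal := by
    rw [prob_compl_eq_one_sub hmB, ENNReal.toReal_sub_of_le prob_le_one (by simp)]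
    simp
  have h3 : (P Bᶜ).toReal ≤ (P A).toReal :=
    ENNReal.toReal_mono (measure_ne_top P A) h1
  linarith
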